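/- Schur polynomial at an alphabet minus one letter (cancellation form of Corollary 1.2): let λ be a partition. Then in the variables x_1, …, x_m, y: Σ_μ (−y)^{|λ| − |μ|} · s_μ(x_1, …, x_m, y) = s_λ(x_1, …, x_m), where the sum ranges over all partitions μ ⊆ λ such that λ/μ is a vertical strip. (This identity expresses that s_λ[(X + y) − y] = s_λ[X]: removing a single letter from an alphabet corresponds to an alternating sum over vertical strips.) -/

import Mathlib

open MvPolynomial

open scoped Classical

/-- The complete homogeneous symmetric polynomial `h_k` indexed by an integer,
with the convention `h_0 = 1` and `h_k = 0` for `k < 0`. -/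
noncomputable def hInt (σ : Type*) [Fintype σ] [DecidableEq σ] (R : Type*) [CommRing R]
    (k : ℤ) : MvPolynomial σ R :=
  if 0 ≤ k then hsymm σ R k.toNat else 0

/-- The Jacobi–Trudi polynomial `s_α = det (h_{α_i + j - i})` of an arbitrary integer
sequence `α`, in the variables indexed by `σ`. -/
noncomputable def jacobiTrudi (σ : Type*) [Fintype σ] [DecidableEq σ] (R : Type*) [CommRing R]
    {l : ℕ} (α : Fin l → ℤ) : MvPolynomial σ R :=
  Matrix.det (Matrix.of fun i j : Fin l => hInt σ R (α i + (j : ℕ) - (i : ℕ)))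

/-- `λ/μ` is a vertical strip: `λ_i - μ_i ∈ {0, 1}` for every `i`. -/
def IsVerticalStrip {l : ℕ} (lam μ : Fin l → ℕ) : Prop :=
  ∀ i, μ i ≤ lam i ∧ lam i ≤ μ i + 1


theorem hsymm_option (σ : Type*) [Fintype σ] [DecidableEq σ] (R : Type*) [CommRing R] (k : ℕ) :
    hsymm (Option σ) R (k+1)
      = rename some (hsymm σ R (k+1)) + X none * hsymm (Option σ) R k := by
  rw [hsymm, ← Equiv.sum_comp (symOptionSuccEquiv (α := σ) (n := k)).symm, Fintype.sum_sum_type]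
  rw [add_comm]
  congr 1
  · rw [hsymm, map_sum]
    refine Finset.sum_congr rfl fun s _ => ?_
    show ((s.map Function.Embedding.some).1.map X).prod = _
    rw [Sym.map, Multiset.map_map]
    simp [← Multiset.prod_hom', Function.comp]
  · rw [hsymm, Finset.mul_sum]
    refine Finset.sum_congr rfl fun s _ => ?_
    show (((none ::ₛ s) : Sym (Option σ) (k+1)).1.map X).prod = _
    rw [Sym.cons, Multiset.map_cons, Multiset.prod_cons]

theorem hInt_rec (R : Type*) [CommRing R] (m : ℕ) (k : ℤ) :
    rename Fin.castSucc (hInt (Fin m) R k)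
      = hInt (Fin (m+1)) R k - X (Fin.last m) * hInt (Fin (m+1)) R (k-1) := by
  have key : ∀ j : ℕ, hsymm (Fin (m+1)) R j = rename (finSuccEquivLast (n := m)).symm (hsymm (Option (Fin m)) R j) :=
    fun j => (rename_hsymm _ R j _).symm
  rcases lt_trichotomy k 0 with h | h | h
  · rw [hInt, hInt, hInt, if_neg (by omega), if_neg (by omega), if_neg (by omega)]
    simp
  · subst h
    rw [hInt, hInt, hInt, if_pos le_rfl, if_pos le_rfl, if_neg (by omega)]
    simp
  · obtain ⟨j, rfl⟩ : ∃ j : ℕ, k = (j : ℤ) + 1 := ⟨(k-1).toNat, by omega⟩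
    rw [hInt, hInt, hInt, if_pos (by omega), if_pos (by omega), if_pos (by omega)]
    have h1 : ((j : ℤ) + 1).toNat = j + 1 := by omega
    have h2 : ((j : ℤ) + 1 - 1).toNat = j := by omega
    rw [h1, h2, key (j+1), key j, hsymm_option, map_add, map_mul, eq_sub_iff_add_eq]
    rw [rename_rename, rename_X, finSuccEquivLast_symm_none]
    congr 2
    ext i
    simp [Function.comp]

theorem det_expand (R : Type*) [CommRing R] (m l : ℕ) (lam : Fin l → ℕ) :
    rename Fin.castSucc (jacobiTrudi (Fin m) R (fun i => (lam i : ℤ)))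
      = ∑ ε : Fin l → Bool,
          (-(X (Fin.last m) : MvPolynomial (Fin (m+1)) R)) ^ (∑ i, if ε i then 1 else 0) *
            Matrix.det (Matrix.of fun i j : Fin l =>
              hInt (Fin (m+1)) R ((lam i : ℤ) - (if ε i then 1 else 0) + (j : ℕ) - (i : ℕ))) := by
  set y : MvPolynomial (Fin (m+1)) R := X (Fin.last m) with hy
  set H : ℤ → MvPolynomial (Fin (m+1)) R := hInt (Fin (m+1)) R with hH
  -- row pieces
  set w : Fin l → Bool → (Fin l → MvPolynomial (Fin (m+1)) R) :=
    fun i b j => H ((lam i : ℤ) - (if b then 1 else 0) + (j : ℕ) - (i : ℕ)) with hw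
  have step1 : rename Fin.castSucc (jacobiTrudi (Fin m) R (fun i => (lam i : ℤ)))
      = Matrix.detRowAlternating (fun i : Fin l => ∑ b : Bool, (if b then -y else 1) • w i b) := by
    rw [jacobiTrudi, AlgHom.map_det]
    show Matrix.detRowAlternating _ = _
    congr 1
    funext i j
    show rename Fin.castSucc (hInt (Fin m) R ((lam i : ℤ) + (j:ℕ) - (i:ℕ))) = _
    rw [hInt_rec, Fintype.sum_bool]
    simp only [hw, eq_self_iff_true, Bool.false_eq_true, if_true, if_false, one_smul,
      Pi.add_apply, Pi.smul_apply, smul_eq_mul, neg_mul]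
    simp only [hy, hH]
    ring_nf
  rw [step1,
    show (Matrix.detRowAlternating (fun i : Fin l => ∑ b : Bool, (if b then -y else 1) • w i b))
      = (Matrix.detRowAlternating (R := MvPolynomial (Fin (m+1)) R)
          (n := Fin l)).toMultilinearMap (fun i : Fin l => ∑ b : Bool, (if b then -y else 1) • w i b) from rfl,
    MultilinearMap.map_sum]
  refine Finset.sum_congr rfl fun ε _ => ?_
  have := MultilinearMap.map_smul_univ
    (Matrix.detRowAlternating (R := MvPolynomial (Fin (m+1)) R) (n := Fin l)).toMultilinearMap
    (fun i => if ε i then -y else 1) (fun i => w i (ε i))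
  rw [this, smul_eq_mul]
  congr 1
  rw [show (∏ i, if ε i then -y else 1) = ∏ i, (-y) ^ (if ε i then 1 else 0) by
    refine Finset.prod_congr rfl fun i _ => ?_; cases h : ε i <;> simp,
    Finset.prod_pow_eq_pow_sum]

theorem det_row_succ_eq (σ : Type*) [Fintype σ] [DecidableEq σ] (R : Type*) [CommRing R]
    {l : ℕ} (α : Fin l → ℤ) (i : ℕ) (hi : i + 1 < l)
    (h : α ⟨i+1, hi⟩ = α ⟨i, by omega⟩ + 1) :
    (Matrix.of fun i j : Fin l => hInt σ R (α i + (j : ℕ) - (i : ℕ))).det = 0 := by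
  apply Matrix.det_zero_of_row_eq (i := (⟨i, by omega⟩ : Fin l)) (j := ⟨i+1, hi⟩)
  · intro e
    have := congrArg Fin.val e
    simp at this
  · funext j
    show hInt σ R _ = hInt σ R _
    congr 1
    rw [h]
    push_cast
    ring
theorem det_row_last_zero (σ : Type*) [Fintype σ] [DecidableEq σ] (R : Type*) [CommRing R]
    {l : ℕ} (α : Fin l → ℤ) (i : Fin l) (hlast : (i : ℕ) = l - 1) (h : α i < 0) :
    (Matrix.of fun i j : Fin l => hInt σ R (α i + (j : ℕ) - (i : ℕ))).det = 0 := by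
  apply Matrix.det_eq_zero_of_row_eq_zero i
  intro j
  show hInt σ R _ = 0
  rw [hInt, if_neg]
  have := j.isLt
  omega

/-- **Schur polynomial at an alphabet minus one letter (cancellation form).**  For a
partition `λ`, `Σ_μ (-y)^{|λ| - |μ|} s_μ(x_1, …, x_m, y) = s_λ(x_1, …, x_m)`, summed over
all partitions `μ ⊆ λ` such that `λ/μ` is a vertical strip.  Here the variables are
`x_i = X i.castSucc` and `y = X (Fin.last m)`. -/
theorem schur_remove_one_letter (R : Type*) [CommRing R] (m l : ℕ)
    (lam : Fin l → ℕ) (hlam : Antitone lam) :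
    ∑ μ ∈ (Finset.Iic lam).filter (fun μ => Antitone μ ∧ IsVerticalStrip lam μ),
      (-(X (Fin.last m) : MvPolynomial (Fin (m + 1)) R)) ^ ((∑ i, lam i) - ∑ i, μ i) *
        jacobiTrudi (Fin (m + 1)) R (fun i => (μ i : ℤ))
      = rename Fin.castSucc (jacobiTrudi (Fin m) R (fun i => (lam i : ℤ))) := by
  rw [det_expand]
  set y : MvPolynomial (Fin (m+1)) R := X (Fin.last m) with hy
  set α : (Fin l → Bool) → Fin l → ℤ :=
    fun ε i => (lam i : ℤ) - (if ε i then 1 else 0) with hα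
  set P : (Fin l → Bool) → Prop :=
    fun ε => Antitone (α ε) ∧ ∀ i, 0 ≤ α ε i with hP
  rw [← Finset.sum_filter_add_sum_filter_not Finset.univ P]
  have bad : ∀ ε ∈ Finset.univ.filter (fun ε => ¬ P ε),
      (-y) ^ (∑ i, if ε i then 1 else 0) *
        Matrix.det (Matrix.of fun i j : Fin l =>
          hInt (Fin (m+1)) R ((lam i : ℤ) - (if ε i then 1 else 0) + (j : ℕ) - (i : ℕ))) = 0 := by
    intro ε hε
    rw [Finset.mem_filter] at hε
    have hdet : (Matrix.of fun i j : Fin l =>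
        hInt (Fin (m+1)) R (α ε i + (j : ℕ) - (i : ℕ))).det = 0 := by
      by_cases hA : ∃ i : ℕ, ∃ hi : i + 1 < l, α ε ⟨i+1, hi⟩ = α ε ⟨i, by omega⟩ + 1
      · obtain ⟨i, hi, h⟩ := hA
        exact det_row_succ_eq _ R (α ε) i hi h
      by_cases hB : ∃ i : Fin l, (i : ℕ) = l - 1 ∧ α ε i < 0
      · obtain ⟨i, h1, h2⟩ := hB
        exact det_row_last_zero _ R (α ε) i h1 h2
      exfalso
      push_neg at hA hB
      -- consecutive step
      have step : ∀ (i : ℕ) (hi : i + 1 < l), α ε ⟨i+1, hi⟩ ≤ α ε ⟨i, by omega⟩ := by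
        intro i hi
        have h1 := hA i hi
        have h2 : lam ⟨i+1, hi⟩ ≤ lam ⟨i, by omega⟩ := hlam (by simp [Fin.le_def])
        simp only [hα] at h1 ⊢
        cases hεa : ε ⟨i, by omega⟩ <;> cases hεb : ε ⟨i+1, hi⟩ <;>
          simp [hεa, hεb] at h1 ⊢ <;> omega
      have mono : ∀ (d i : ℕ) (h : i + d < l), α ε ⟨i + d, h⟩ ≤ α ε ⟨i, by omega⟩ := by
        intro d
        induction d with
        | zero => intro i h; simp
        | succ d ih =>
          intro i h
          calc α ε ⟨i + (d+1), h⟩ ≤ α ε ⟨i + d, by omega⟩ := step (i+d) h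
            _ ≤ α ε ⟨i, by omega⟩ := ih i (by omega)
      have hanti : Antitone (α ε) := by
        intro a b hab
        obtain ⟨av, ha⟩ := a
        obtain ⟨bv, hb⟩ := b
        rw [Fin.mk_le_mk] at hab
        have := mono (bv - av) av (by omega)
        simpa only [show av + (bv - av) = bv from by omega] using this
      have hnonneg : ∀ i, 0 ≤ α ε i := by
        intro i
        have hl : 0 < l := i.pos
        have hlast := hB ⟨l-1, by omega⟩ (by simp)
        have := hanti (a := i) (b := ⟨l-1, by omega⟩) (by rw [Fin.le_def]; have := i.isLt; simp; omega)
        omega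
      exact hε.2 ⟨hanti, hnonneg⟩
    simp only [hα] at hdet
    rw [hdet, mul_zero]
  rw [Finset.sum_eq_zero bad, add_zero]
  symm
  refine Finset.sum_nbij' (i := fun ε i => lam i - (if ε i then 1 else 0))
    (j := fun μ i => decide (μ i < lam i)) ?_ ?_ ?_ ?_ ?_
  · -- maps into S2
    intro ε hε
    rw [Finset.mem_filter] at hε ⊢
    obtain ⟨-, hanti, hnn⟩ := hε
    have hbit : ∀ i, (if ε i then 1 else 0) ≤ lam i := by
      intro i
      have := hnn i
      simp only [hα] at this
      cases h : ε i <;> simp [h] at this ⊢ <;> omega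
    refine ⟨Finset.mem_Iic.mpr fun i => Nat.sub_le _ _, ?_, fun i => ⟨Nat.sub_le _ _, ?_⟩⟩
    · intro a b hab
      have h1 := hanti hab
      have h2 := hnn a
      have h3 := hnn b
      simp only [hα] at h1 h2 h3
      cases ha : ε a <;> cases hb : ε b <;> simp [ha, hb] at h1 h2 h3 ⊢ <;> omega
    · cases h : ε i <;> simp [h] <;> omega
  · -- maps back
    intro μ hμ
    rw [Finset.mem_filter] at hμ ⊢
    obtain ⟨hle, hanti, hvs⟩ := hμ
    rw [Finset.mem_Iic] at hle
    have key : ∀ i, α (fun i => decide (μ i < lam i)) i = (μ i : ℤ) := by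
      intro i
      have h1 : μ i ≤ lam i := hle i
      have h2 := (hvs i).2
      simp only [hα]
      by_cases h : μ i < lam i <;> simp [h] <;> omega
    refine ⟨Finset.mem_univ _, ?_, fun i => by rw [key i]; positivity⟩
    intro a b hab
    rw [key a, key b]
    exact_mod_cast hanti hab
  · -- left inverse
    intro ε hε
    rw [Finset.mem_filter] at hε
    obtain ⟨-, -, hnn⟩ := hε
    funext i
    have := hnn i
    simp only [hα] at this
    cases h : ε i <;> simp [h] at this ⊢ <;> omega
  · -- right inverse
    intro μ hμ
    rw [Finset.mem_filter] at hμ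
    obtain ⟨hle, -, hvs⟩ := hμ
    rw [Finset.mem_Iic] at hle
    funext i
    have h1 : μ i ≤ lam i := hle i
    have h2 := (hvs i).2
    by_cases h : μ i < lam i <;> simp [h] <;> omega
  · -- values agree
    intro ε hε
    rw [Finset.mem_filter] at hε
    obtain ⟨-, hanti, hnn⟩ := hε
    have hbit : ∀ i, (if ε i then 1 else 0) ≤ lam i := by
      intro i
      have := hnn i
      simp only [hα] at this
      cases h : ε i <;> simp [h] at this ⊢ <;> omega
    congr 1
    · -- exponents
      congr 1
      have : ∑ i, (lam i - (if ε i then 1 else 0)) + ∑ i, (if ε i then 1 else 0)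
          = ∑ i, lam i := by
        rw [← Finset.sum_add_distrib]
        exact Finset.sum_congr rfl fun i _ => by have := hbit i; omega
      beta_reduce
      omega
    · -- determinants
      rw [jacobiTrudi]
      refine congrArg Matrix.det ?_
      funext i j
      show hInt _ R _ = hInt _ R _
      congr 1
      have := hbit i
      cases h : ε i <;> simp [h] at this ⊢ <;> push_cast <;> omega
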